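/- Let P1, P2, λ12, λ13, λ23, N2, N3 be positive reals, and define for α ∈ [0,1]: h(α) = (1/2)·log(1 + P1·λ12·(1 − α)/N2) and g(α) = (1/2)·log(1 + P1·λ13/N3 + P2·λ23/N3 + 2·√(α·λ13·λ23·P1·P2)/N3). If P1·λ13/N3 + P2·λ23/N3 ≥ P1·λ12/N2, then: (a) sup_{α∈[0,1]} min{h(α), g(α)} = h(0) = (1/2)·log(1 + P1·λ12/N2); and (b) the gap (1/2)·log(1 + P1·λ13/N3 + P1·λ12/N2) − (1/2)·log(1 + P1·λ12/N2) is strictly positive and does not depend on P2. -/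

import Mathlib

/-- If `P1λ13/N3 + P2λ23/N3 ≥ P1λ12/N2` then the decode-and-forward
rate `sup_{α∈[0,1]} min{h(α), g(α)}` equals `h(0) = (1/2)log(1 + P1λ12/N2)` (attained
at `α = 0`), and the gap between the broadcast cut-set bound
`(1/2)log(1 + P1λ13/N3 + P1λ12/N2)` and `(1/2)log(1 + P1λ12/N2)` is strictly positive
(and manifestly independent of `P2`). -/
theorem stmt10 (P1 P2 lam12 lam13 lam23 N2 N3 : ℝ)
    (hP1 : 0 < P1) (hP2 : 0 < P2) (hl12 : 0 < lam12) (hl13 : 0 < lam13)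
    (hl23 : 0 < lam23) (hN2 : 0 < N2) (hN3 : 0 < N3)
    (h : P1 * lam12 / N2 ≤ P1 * lam13 / N3 + P2 * lam23 / N3) :
    ((∀ α ∈ Set.Icc (0 : ℝ) 1,
      min ((1 / 2) * Real.log (1 + P1 * lam12 * (1 - α) / N2))
          ((1 / 2) * Real.log (1 + P1 * lam13 / N3 + P2 * lam23 / N3 +
            2 * Real.sqrt (α * lam13 * lam23 * P1 * P2) / N3))
        ≤ (1 / 2) * Real.log (1 + P1 * lam12 / N2)) ∧
    min ((1 / 2) * Real.log (1 + P1 * lam12 * (1 - (0 : ℝ)) / N2))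
        ((1 / 2) * Real.log (1 + P1 * lam13 / N3 + P2 * lam23 / N3 +
          2 * Real.sqrt ((0 : ℝ) * lam13 * lam23 * P1 * P2) / N3))
      = (1 / 2) * Real.log (1 + P1 * lam12 / N2)) ∧
    0 < (1 / 2) * Real.log (1 + P1 * lam13 / N3 + P1 * lam12 / N2)
        - (1 / 2) * Real.log (1 + P1 * lam12 / N2) := by
  have hA : (0:ℝ) < 1 + P1 * lam12 / N2 := by positivity
  refine ⟨⟨?_, ?_⟩, ?_⟩
  · intro α hα
    refine le_trans (min_le_left _ _) ?_
    obtain ⟨hα0, hα1⟩ := hα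
    have harg : 1 + P1 * lam12 * (1 - α) / N2 ≤ 1 + P1 * lam12 / N2 := by
      have h1 : P1 * lam12 * (1 - α) ≤ P1 * lam12 := by
        nlinarith [mul_nonneg (mul_pos hP1 hl12).le hα0]
      have := div_le_div_of_nonneg_right h1 hN2.le
      linarith
    have hpos : (0:ℝ) < 1 + P1 * lam12 * (1 - α) / N2 := by
      have : (0:ℝ) ≤ P1 * lam12 * (1 - α) / N2 := by
        apply div_nonneg _ hN2.le
        nlinarith [mul_nonneg (mul_pos hP1 hl12).le (sub_nonneg.2 hα1)]
      linarith
    have := Real.log_le_log hpos harg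
    linarith
  · have e1 : 1 + P1 * lam12 * (1 - (0:ℝ)) / N2 = 1 + P1 * lam12 / N2 := by ring
    have e2 : 1 + P1 * lam13 / N3 + P2 * lam23 / N3 +
        2 * Real.sqrt ((0:ℝ) * lam13 * lam23 * P1 * P2) / N3
        = 1 + P1 * lam13 / N3 + P2 * lam23 / N3 := by
      rw [show ((0:ℝ) * lam13 * lam23 * P1 * P2) = 0 by ring, Real.sqrt_zero]
      ring
    rw [e1, e2, min_eq_left (mul_le_mul_of_nonneg_left
      (Real.log_le_log hA (by linarith)) (by norm_num : (0:ℝ) ≤ 1/2))]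
  · have : Real.log (1 + P1 * lam12 / N2) < Real.log (1 + P1 * lam13 / N3 + P1 * lam12 / N2) := by
      apply Real.log_lt_log hA
      have : (0:ℝ) < P1 * lam13 / N3 := by positivity
      linarith
    linarith
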